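/- Let (W,+) be a semigroup. Then the set A(W) of quasi-absorbing elements is a (two-sided) ideal of (W,+); moreover, for any α, β ∈ A(W) one has α + β = β + α ∈ {α, β}, and A(W) ⊆ W_L(u) ∩ W_R(u) for every u ∈ W\A(W). -/
import Mathlib


open Pointwise

/-- Principal left ideal W_L(u) = (W + {u}) ∪ {u}. -/
def WLset {W : Type*} [AddSemigroup W] (u : W) : Set W :=
  ((Set.univ : Set W) + ({u} : Set W)) ∪ {u}

/-- Principal right ideal W_R(u) = ({u} + W) ∪ {u}. -/
def WRset {W : Type*} [AddSemigroup W] (u : W) : Set W :=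
  (({u} : Set W) + (Set.univ : Set W)) ∪ {u}

/-- Principal two-sided ideal W(u) = (W_L(u) + W) ∪ W_L(u). -/
def WIset {W : Type*} [AddSemigroup W] (u : W) : Set W :=
  (WLset u + (Set.univ : Set W)) ∪ WLset u

/-- Green L-class. -/
def Lclass {W : Type*} [AddSemigroup W] (u : W) : Set W := {v | WLset u = WLset v}

/-- Green R-class. -/
def Rclass {W : Type*} [AddSemigroup W] (u : W) : Set W := {v | WRset u = WRset v}

/-- Green H-class. -/
def Hclass {W : Type*} [AddSemigroup W] (u : W) : Set W :=
  {v | WLset u = WLset v ∧ WRset u = WRset v}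

def IsLeftIdealSG {W : Type*} [AddSemigroup W] (A : Set W) : Prop :=
  (Set.univ : Set W) + A ⊆ A

def IsRightIdealSG {W : Type*} [AddSemigroup W] (A : Set W) : Prop :=
  A + (Set.univ : Set W) ⊆ A

def IsIdealSG {W : Type*} [AddSemigroup W] (A : Set W) : Prop :=
  IsLeftIdealSG A ∧ IsRightIdealSG A

/-- The set E(W) of idempotents. -/
def Eset (W : Type*) [AddSemigroup W] : Set W := {e | e + e = e}

/-- The Rees order: f ≤_H e iff e + f = f + e = f. -/
def ReesLE {W : Type*} [AddSemigroup W] (f e : W) : Prop := e + f = f ∧ f + e = f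

/-- E^≤(e) = {f ∈ E(W) | f ≤_H e}. -/
def Ele {W : Type*} [AddSemigroup W] (e : W) : Set W := {f ∈ Eset W | ReesLE f e}

/-- E^lin(W): idempotents α such that ≤_H is a total order on E^≤(α). -/
def Elin (W : Type*) [AddSemigroup W] : Set W :=
  {α ∈ Eset W | ∀ f ∈ Ele α, ∀ g ∈ Ele α, ReesLE f g ∨ ReesLE g f}

def Afin (W : Type*) [AddSemigroup W] : Set W :=
  {α ∈ Elin W | (Ele α).Finite ∧ ∀ w ∉ Ele α, w + α = α ∧ α + w = α}

/-- The set A(W) of quasi-absorbing elements. -/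
def AW (W : Type*) [AddSemigroup W] : Set W :=
  {α ∈ Elin W | ∀ w ∉ Ele α, w + α = α ∧ α + w = α}

/-- Ā_n = ⋃_{i=1}^n A_i. -/
def Abar (W : Type*) [AddSemigroup W] : ℕ → Set W
  | 0 => ∅
  | n + 1 => Abar W n ∪ {α | α ∉ Abar W n ∧ ∀ w ∉ Abar W n, w + α = α ∧ α + w = α}

/-- The sets A_n from the stepwise construction. -/
def Astep (W : Type*) [AddSemigroup W] : ℕ → Set W
  | 0 => ∅
  | n + 1 => {α | α ∉ Abar W n ∧ ∀ w ∉ Abar W n, w + α = α ∧ α + w = α}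

/-- The set A_s(W) of stepwise quasi-absorbing elements. -/
def As (W : Type*) [AddSemigroup W] : Set W := {α | ∃ n, α ∈ Astep W n}

/-- The set P(A) of A-primitive idempotents. -/
def Pset {W : Type*} [AddSemigroup W] (A : Set W) : Set W :=
  {e | e ∈ Eset W \ A ∧ ∀ f ∈ Eset W, ReesLE f e → f = e ∨ f ∈ A}

/-- G ⊆ W is a group under +: closed, with a two-sided identity and inverses. -/
def IsGroupOn {W : Type*} [AddSemigroup W] (G : Set W) : Prop :=
  (∀ a ∈ G, ∀ b ∈ G, a + b ∈ G) ∧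
  ∃ e ∈ G, (∀ a ∈ G, a + e = a ∧ e + a = a) ∧
    ∀ a ∈ G, ∃ b ∈ G, a + b = e ∧ b + a = e

/-- D is an A-minimal ideal. -/
def IsMinimalIdealRel {W : Type*} [AddSemigroup W] (A D : Set W) : Prop :=
  IsIdealSG D ∧ ¬ D ⊆ A ∧ ∀ E : Set W, IsIdealSG E → E ⊂ D → E ⊆ A

/-- D is an ideal of the subsemigroup (V,+). -/
def IsIdealIn {W : Type*} [AddSemigroup W] (V D : Set W) : Prop :=
  D ⊆ V ∧ V + D ⊆ D ∧ D + V ⊆ D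

/-- The subsemigroup (V,+) is A-simple. -/
def IsSimpleRel {W : Type*} [AddSemigroup W] (V A : Set W) : Prop :=
  A ⊂ V ∧ ∀ D : Set W, IsIdealIn V D → D = V ∨ D ⊆ A

/-- A bottleneck ideal. -/
def IsBottleneck {W : Type*} [AddSemigroup W] (A : Set W) : Prop :=
  IsIdealSG A ∧ ∀ D : Set W, IsIdealSG D → D ⊆ A ∨ A ⊆ D

lemma Ele_trans {W : Type*} [AddSemigroup W] {α f g : W}
    (hf : f ∈ Ele α) (hg : g ∈ Ele f) : g ∈ Ele α := by
  obtain ⟨hfE, hαf, hfα⟩ := hf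
  obtain ⟨hgE, hfg, hgf⟩ := hg
  refine ⟨hgE, ?_, ?_⟩
  · calc α + g = α + (f + g) := by rw [hfg]
      _ = (α + f) + g := by rw [add_assoc]
      _ = f + g := by rw [hαf]
      _ = g := hfg
  · calc g + α = (g + f) + α := by rw [hgf]
      _ = g + (f + α) := by rw [add_assoc]
      _ = g + f := by rw [hfα]
      _ = g := hgf

lemma Ele_mem_AW {W : Type*} [AddSemigroup W] {α f : W}
    (hα : α ∈ AW W) (hf : f ∈ Ele α) : f ∈ AW W := by
  obtain ⟨⟨hαE, hlin⟩, habs⟩ := hα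
  have hsub : Ele f ⊆ Ele α := fun g hg => Ele_trans hf hg
  refine ⟨⟨hf.1, fun g hg h hh => hlin g (hsub hg) h (hsub hh)⟩, ?_⟩
  intro u hu
  by_cases huα : u ∈ Ele α
  · rcases hlin u huα f hf with h | h
    · exact absurd ⟨huα.1, h⟩ hu
    · exact ⟨h.1, h.2⟩
  · obtain ⟨h1, h2⟩ := habs u huα
    obtain ⟨_, hαf, hfα⟩ := hf
    constructor
    · calc u + f = u + (α + f) := by rw [hαf]
        _ = (u + α) + f := by rw [add_assoc]
        _ = α + f := by rw [h1]
        _ = f := hαf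
    · calc f + u = (f + α) + u := by rw [hfα]
        _ = f + (α + u) := by rw [add_assoc]
        _ = f + α := by rw [h2]
        _ = f := hfα

theorem AW_properties {W : Type*} [AddSemigroup W] :
    IsIdealSG (AW W) ∧
    (∀ α ∈ AW W, ∀ β ∈ AW W, α + β = β + α ∧ (α + β = α ∨ α + β = β)) ∧
    (∀ u ∈ (Set.univ : Set W) \ AW W, AW W ⊆ WLset u ∩ WRset u) := by
  have key : ∀ α ∈ AW W, ∀ w : W, w + α ∈ AW W ∧ α + w ∈ AW W := by
    intro α hα w
    by_cases hw : w ∈ Ele α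
    · have hm := Ele_mem_AW hα hw
      obtain ⟨_, hαw, hwα⟩ := hw
      rw [hwα, hαw]
      exact ⟨hm, hm⟩
    · obtain ⟨h1, h2⟩ := hα.2 w hw
      rw [h1, h2]
      exact ⟨hα, hα⟩
  refine ⟨⟨?_, ?_⟩, ?_, ?_⟩
  · rintro x ⟨w, -, α, hα, rfl⟩
    exact (key α hα w).1
  · rintro x ⟨α, hα, w, -, rfl⟩
    exact (key α hα w).2
  · intro α hα β hβ
    by_cases hβα : β ∈ Ele α
    · obtain ⟨_, h1, h2⟩ := hβα
      rw [h1, h2]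
      exact ⟨rfl, Or.inr rfl⟩
    · obtain ⟨h1, h2⟩ := hα.2 β hβα
      rw [h1, h2]
      exact ⟨rfl, Or.inl rfl⟩
  · rintro u ⟨-, hu⟩ α hα
    have huα : u ∉ Ele α := fun h => hu (Ele_mem_AW hα h)
    obtain ⟨h1, h2⟩ := hα.2 u huα
    constructor
    · exact Or.inl ⟨α, Set.mem_univ α, u, rfl, h2⟩
    · exact Or.inl ⟨u, rfl, α, Set.mem_univ α, h1⟩
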